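/- Let $f_j:\mathbb{R}^{i_j}\to[0,1]$ be integrable log-concave functions for $j=1,\dots,m$. Then $\int_{\mathbb{R}^{i_1+\cdots+i_m}} \min\{f_1(x_1),\dots,f_m(x_m)\}\, d(x_1,\dots,x_m) \geq \prod_{j=1}^m \int_{\mathbb{R}^{i_j}} f_j(x_j)\,dx_j$. -/

import Mathlib

open MeasureTheory

/-- A function is log-concave if `f((1-λ)x + λy) ≥ f(x)^(1-λ) f(y)^λ`. -/
def LogConcave {E : Type*} [AddCommGroup E] [Module ℝ E] (f : E → ℝ) : Prop :=
  ∀ x y : E, ∀ l : ℝ, 0 ≤ l → l ≤ 1 →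
    f x ^ (1 - l) * f y ^ l ≤ f ((1 - l) • x + l • y)

/-- An integrable nonnegative log-concave function has integrable `p`-th power, `0 < p ≤ 1`. -/
lemma logConcave_rpow_integrable {n : ℕ} {f : (Fin n → ℝ) → ℝ}
    (hf0 : ∀ x, 0 ≤ f x) (hflc : LogConcave f) (hfint : Integrable f)
    {p : ℝ} (hp0 : 0 < p) (hp1 : p ≤ 1) :
    Integrable (fun x => f x ^ p) := by
  by_cases hz : ∀ x, f x = 0
  · have : (fun x : Fin n → ℝ => f x ^ p) = fun _ => (0 : ℝ) := by
      funext x; rw [hz x, Real.zero_rpow hp0.ne']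
    rw [this]; exact integrable_zero _ _ _
  push_neg at hz
  obtain ⟨a, ha⟩ := hz
  have hM : 0 < f a := lt_of_le_of_ne (hf0 a) (Ne.symm ha)
  -- the dominating function
  have h1 : Integrable (fun y : Fin n → ℝ => f (y + (1 - p) • a)) :=
    ((measurePreserving_add_right (volume : Measure (Fin n → ℝ))
      ((1 - p) • a)).integrable_comp_emb
      (MeasurableEquiv.addRight ((1 - p) • a)).measurableEmbedding).2 hfint
  have h2 : Integrable (fun x : Fin n → ℝ => f (p • x + (1 - p) • a)) :=
    h1.comp_smul hp0.ne'
  have h3 : Integrable (fun x : Fin n → ℝ =>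
      f a ^ (p - 1) * f ((1 - p) • a + p • x)) := by
    simp_rw [add_comm ((1 - p) • a) _]
    exact h2.const_mul _
  refine h3.mono' ?_ ?_
  · exact ((Real.continuous_rpow_const hp0.le).measurable.comp_aemeasurable
      hfint.aemeasurable).aestronglyMeasurable
  · filter_upwards with x
    have key := hflc a x p hp0.le hp1
    have hpow : f a ^ (p - 1) * (f a ^ (1 - p) * f x ^ p) = f x ^ p := by
      rw [← mul_assoc, ← Real.rpow_add hM]
      norm_num
    rw [Real.norm_eq_abs, abs_of_nonneg (Real.rpow_nonneg (hf0 x) p), ← hpow]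
    exact mul_le_mul_of_nonneg_left key (Real.rpow_nonneg hM.le _)

/-- for integrable log-concave `f_j : ℝ^{i_j} → [0,1]`,
`∫ min_j f_j(x_j) d(x_1,…,x_m) ≥ ∏_j ∫ f_j`. -/
theorem stmt_2 (m : ℕ) (hm : 0 < m) (i : Fin m → ℕ)
    (f : ∀ j : Fin m, (Fin (i j) → ℝ) → ℝ)
    (hf0 : ∀ j x, 0 ≤ f j x) (hf1 : ∀ j x, f j x ≤ 1)
    (hflc : ∀ j, LogConcave (f j)) (hfint : ∀ j, Integrable (f j)) :
    ∏ j, ∫ xj : Fin (i j) → ℝ, f j xj ≤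
      ∫ x : ∀ j : Fin m, Fin (i j) → ℝ, ⨅ j : Fin m, f j (x j) := by
  haveI : NeZero m := ⟨hm.ne'⟩
  set p : ℝ := (m : ℝ)⁻¹ with hp
  have hm' : (0 : ℝ) < m := Nat.cast_pos.2 hm
  have hp0 : 0 < p := inv_pos.2 hm'
  have hp1 : p ≤ 1 := by
    rw [hp]
    exact inv_le_one_of_one_le₀ (by exact_mod_cast hm)
  -- integrability of the p-th powers
  have hgint : ∀ j, Integrable (fun x : Fin (i j) → ℝ => f j x ^ p) := fun j =>
    logConcave_rpow_integrable (hf0 j) (hflc j) (hfint j) hp0 hp1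
  -- the dominating product function
  have hGint : Integrable (fun x : ∀ j : Fin m, Fin (i j) → ℝ =>
      ∏ j, f j (x j) ^ p) := Integrable.fintype_prod_dep hgint
  -- coordinate maps are quasi measure preserving
  have hqmp : ∀ j : Fin m, Measure.QuasiMeasurePreserving
      (fun x : ∀ j : Fin m, Fin (i j) → ℝ => x j) volume volume := by
    intro j
    refine ⟨measurable_pi_apply j, Measure.AbsolutelyContinuous.mk fun s hs h0 => ?_⟩
    rw [Measure.map_apply (measurable_pi_apply j) hs]
    show (volume : Measure (∀ j : Fin m, Fin (i j) → ℝ)) _ = 0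
    rw [volume_pi]
    exact Measure.pi_eval_preimage_null _ h0
  -- properties of the infimum function
  set F : (∀ j : Fin m, Fin (i j) → ℝ) → ℝ := fun x => ⨅ j : Fin m, f j (x j) with hF
  have hFle : ∀ x j, F x ≤ f j (x j) := fun x j =>
    ciInf_le (Finite.bddBelow_range _) j
  have hF0 : ∀ x, 0 ≤ F x := fun x => le_ciInf fun j => hf0 j (x j)
  have hFdom : ∀ x, F x ≤ ∏ j, f j (x j) ^ p := by
    intro x
    have h1 : F x = ∏ j : Fin m, F x ^ p := by
      rw [Finset.prod_const, Finset.card_univ, Fintype.card_fin,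
        ← Real.rpow_natCast (F x ^ p) m, ← Real.rpow_mul (hF0 x),
        hp, inv_mul_cancel₀ hm'.ne', Real.rpow_one]
    rw [h1]
    exact Finset.prod_le_prod (fun j _ => Real.rpow_nonneg (hF0 x) p)
      (fun j _ => Real.rpow_le_rpow (hF0 x) (hFle x j) hp0.le)
  have hFmeas : AEStronglyMeasurable F
      (volume : Measure (∀ j : Fin m, Fin (i j) → ℝ)) := by
    refine (AEMeasurable.iInf fun j => ?_).aestronglyMeasurable
    exact (hfint j).aemeasurable.comp_quasiMeasurePreserving (hqmp j)
  have hFint : Integrable F := by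
    refine hGint.mono' hFmeas ?_
    filter_upwards with x
    rw [Real.norm_eq_abs, abs_of_nonneg (hF0 x)]
    exact hFdom x
  -- the pointwise lower bound: product ≤ infimum
  have hprodle : ∀ x : ∀ j : Fin m, Fin (i j) → ℝ, ∏ j, f j (x j) ≤ F x := by
    intro x
    refine le_ciInf fun k => ?_
    calc ∏ j, f j (x j) = f k (x k) * ∏ j ∈ Finset.univ.erase k, f j (x j) :=
          (Finset.mul_prod_erase _ _ (Finset.mem_univ k)).symm
      _ ≤ f k (x k) * 1 := by
          refine mul_le_mul_of_nonneg_left ?_ (hf0 k (x k))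
          exact Finset.prod_le_one (fun j _ => hf0 j (x j)) (fun j _ => hf1 j (x j))
      _ = f k (x k) := mul_one _
  -- conclude via Fubini
  rw [← MeasureTheory.integral_fintype_prod_eq_prod (ι := Fin m) (fun j xj => f j xj)]
  exact integral_mono_of_nonneg
    (Filter.Eventually.of_forall fun x => Finset.prod_nonneg fun j _ => hf0 j (x j))
    hFint (Filter.Eventually.of_forall hprodle)
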